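/- Let k be an algebraically closed field, n a positive integer, and σ ∈ Equiv.Perm (Fin n) an n-cycle (a cycle whose support is all of Fin n). Let g and h be n×n matrices over k, both monomial with the same permutation σ and both of determinant 1. Then there exists a diagonal matrix d over k with det d = 1 such that d * g * d⁻¹ = h. -/

import Mathlib

/-- A square matrix `g` is monomial with permutation `σ` if `g i j ≠ 0` exactly when
`i = σ j`. -/
def Matrix.IsMonomialWith {k : Type*} [Field k] {ι : Type*}
    (g : Matrix ι ι k) (σ : Equiv.Perm ι) : Prop :=
  ∀ i j, g i j ≠ 0 ↔ i = σ j

section Aux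

variable {k : Type*} [Field k] {n : ℕ}

/-- A monomial matrix factors as a permutation matrix times a diagonal. -/
lemma monomial_eq_perm_mul_diag (σ : Equiv.Perm (Fin n)) (g : Matrix (Fin n) (Fin n) k)
    (hg : g.IsMonomialWith σ) :
    g = (Equiv.Perm.permMatrix k σ⁻¹) * Matrix.diagonal (fun j => g (σ j) j) := by
  ext i j
  rw [Matrix.mul_diagonal, Equiv.Perm.permMatrix, PEquiv.toMatrix_apply]
  simp only [Equiv.toPEquiv_apply, Option.mem_some_iff]
  by_cases hij : i = σ j
  · subst hij; simp
  · rw [if_neg, zero_mul]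
    · exact by_contra fun hne => hij (by simpa using (hg i j).mp hne)
    · intro hc
      exact hij (by rw [← hc]; simp)

lemma monomial_det (σ : Equiv.Perm (Fin n)) (g : Matrix (Fin n) (Fin n) k)
    (hg : g.IsMonomialWith σ) :
    g.det = ((Equiv.Perm.sign σ : ℤ) : k) * ∏ j, g (σ j) j := by
  conv_lhs => rw [monomial_eq_perm_mul_diag σ g hg]
  rw [Matrix.det_mul, Matrix.det_permutation, Matrix.det_diagonal, Equiv.Perm.sign_inv]

end Aux


/-- Over an algebraically closed field, any two determinant-one monomial matrices with the
same underlying `n`-cycle permutation are conjugate by a diagonal matrix of determinant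
one: any two representatives in `SL(n,k)` of a Coxeter element of the Weyl group are
conjugate by an element of the diagonal torus. -/
theorem monomial_coxeter_representatives_diag_conjugate
    (k : Type*) [Field k] [IsAlgClosed k] (n : ℕ) (hn : 0 < n)
    (σ : Equiv.Perm (Fin n)) (hσc : σ.IsCycle) (hσs : σ.support = Finset.univ)
    (g h : Matrix (Fin n) (Fin n) k)
    (hg : g.IsMonomialWith σ) (hh : h.IsMonomialWith σ)
    (hgdet : g.det = 1) (hhdet : h.det = 1) :
    ∃ d : Matrix (Fin n) (Fin n) k, d.IsDiag ∧ d.det = 1 ∧ d * g * d⁻¹ = h := by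
  classical
  -- basic facts about σ
  have hord : orderOf σ = n := by
    rw [hσc.orderOf, hσs, Finset.card_univ, Fintype.card_fin]
  have hmoves : ∀ x : Fin n, σ x ≠ x := by
    intro x
    have : x ∈ σ.support := by rw [hσs]; exact Finset.mem_univ x
    exact Equiv.Perm.mem_support.mp this
  set x0 : Fin n := ⟨0, hn⟩ with hx0
  -- the map m ↦ σ^m x0 is a bijection of Fin n
  have key : ∀ a b : Fin n, (a : ℕ) ≤ (b : ℕ) →
      (σ ^ (a : ℕ)) x0 = (σ ^ (b : ℕ)) x0 → a = b := by
    intro a b hle hab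
    have h1 : (σ ^ ((b : ℕ) - (a : ℕ))) x0 = x0 := by
      apply (σ ^ (a : ℕ)).injective
      rw [← Equiv.Perm.mul_apply, ← pow_add, Nat.add_sub_cancel' hle, ← hab]
    have h3 : σ ^ ((b : ℕ) - (a : ℕ)) = 1 :=
      (hσc.pow_eq_one_iff' (hmoves x0)).mpr h1
    have h4 : n ∣ (b : ℕ) - (a : ℕ) := by
      have h4' := orderOf_dvd_of_pow_eq_one h3
      rwa [hord] at h4'
    have h5 : (b : ℕ) - (a : ℕ) = 0 :=
      Nat.eq_zero_of_dvd_of_lt h4 (lt_of_le_of_lt (Nat.sub_le _ _) b.isLt)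
    exact Fin.ext (by omega)
  have hinj : Function.Injective (fun m : Fin n => (σ ^ (m : ℕ)) x0) := by
    intro a b hab
    rcases le_total (a : ℕ) (b : ℕ) with hle | hle
    · exact key a b hle hab
    · exact (key b a hle hab.symm).symm
  let E : Fin n ≃ Fin n := Equiv.ofBijective _ (Finite.injective_iff_bijective.mp hinj)
  have hE : ∀ m : Fin n, E m = (σ ^ (m : ℕ)) x0 := fun m => rfl
  -- the ratio function
  set c : Fin n → k := fun j => h (σ j) j * (g (σ j) j)⁻¹ with hc
  have hgne : ∀ j, g (σ j) j ≠ 0 := fun j => (hg (σ j) j).mpr rfl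
  have hhne : ∀ j, h (σ j) j ≠ 0 := fun j => (hh (σ j) j).mpr rfl
  have hcne : ∀ j, c j ≠ 0 := fun j => mul_ne_zero (hhne j) (inv_ne_zero (hgne j))
  -- products of entries agree
  have hprod : ∏ j, g (σ j) j = ∏ j, h (σ j) j := by
    have e1 := monomial_det σ g hg
    have e2 := monomial_det σ h hh
    rw [hgdet] at e1; rw [hhdet] at e2
    have hs : ((Equiv.Perm.sign σ : ℤ) : k) ≠ 0 := by
      rcases Int.units_eq_one_or (Equiv.Perm.sign σ) with hs | hs <;> simp [hs]
    exact mul_left_cancel₀ hs (by rw [← e1, ← e2])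
  have hcprod : ∏ j, c j = 1 := by
    rw [hc]
    rw [Finset.prod_mul_distrib, Finset.prod_inv_distrib, ← hprod]
    exact mul_inv_cancel₀ (Finset.prod_ne_zero_iff.mpr fun j _ => hgne j)
  -- build t along the cycle
  obtain ⟨f, hf⟩ : ∃ f : ℕ → k, ∀ m, f m = ∏ l ∈ Finset.range m, c ((σ ^ l) x0) :=
    ⟨_, fun _ => rfl⟩
  obtain ⟨t, ht⟩ : ∃ t : Fin n → k, ∀ i, t i = f ((E.symm i : ℕ)) := ⟨_, fun _ => rfl⟩
  have hfne : ∀ m, f m ≠ 0 := fun m => by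
    rw [hf]; exact Finset.prod_ne_zero_iff.mpr fun l _ => hcne _
  have htne : ∀ i, t i ≠ 0 := fun i => by rw [ht]; exact hfne _
  have hσn : σ ^ n = 1 := by
    have := pow_orderOf_eq_one σ
    rwa [hord] at this
  have hfn : f n = 1 := by
    rw [hf]
    have h1 : ∏ l ∈ Finset.range n, c ((σ ^ l) x0) = ∏ m : Fin n, c (E m) :=
      (Fin.prod_univ_eq_prod_range (fun l => c ((σ ^ l) x0)) n).symm
    rw [h1, Equiv.prod_comp E c, hcprod]
  have hkey : ∀ j, t (σ j) = c j * t j := by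
    intro j
    set m : Fin n := E.symm j with hm
    have hj : (σ ^ (m : ℕ)) x0 = j := by rw [hm, ← hE, Equiv.apply_symm_apply]
    have hsucc : (σ ^ ((m : ℕ) + 1)) x0 = σ j := by
      rw [pow_succ', Equiv.Perm.mul_apply, hj]
    by_cases hlt : (m : ℕ) + 1 < n
    · have hEm : E ⟨(m : ℕ) + 1, hlt⟩ = σ j := by rw [hE]; exact hsucc
      have hsymm : E.symm (σ j) = ⟨(m : ℕ) + 1, hlt⟩ := by
        rw [← hEm, Equiv.symm_apply_apply]
      rw [ht, ht, hsymm, ← hm]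
      show f ((m : ℕ) + 1) = c j * f (m : ℕ)
      rw [hf, hf, Finset.prod_range_succ, hj, mul_comm]
    · have hmn : (m : ℕ) + 1 = n := by omega
      have hσj : σ j = x0 := by rw [← hsucc, hmn, hσn]; rfl
      have hE0 : E ⟨0, hn⟩ = x0 := by rw [hE]; rfl
      have hsymm : E.symm (σ j) = ⟨0, hn⟩ := by
        rw [hσj, ← hE0, Equiv.symm_apply_apply]
      rw [ht, ht, hsymm, ← hm]
      show f 0 = c j * f (m : ℕ)
      have h2 : c j * f (m : ℕ) = f ((m : ℕ) + 1) := by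
        rw [hf, hf, Finset.prod_range_succ, hj, mul_comm]
      rw [h2, hmn, hfn, hf]
      simp
  -- scale so that the determinant is 1
  have hptne : (∏ i, t i) ≠ 0 := Finset.prod_ne_zero_iff.mpr fun i _ => htne i
  obtain ⟨lam, hlam⟩ := IsAlgClosed.exists_pow_nat_eq (∏ i, t i)⁻¹ hn
  have hlamne : lam ≠ 0 := by
    intro h0
    rw [h0, zero_pow hn.ne'] at hlam
    exact inv_ne_zero hptne hlam.symm
  set u : Fin n → k := fun i => lam * t i with hu
  have hune : ∀ i, u i ≠ 0 := fun i => mul_ne_zero hlamne (htne i)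
  refine ⟨Matrix.diagonal u, Matrix.isDiag_diagonal u, ?_, ?_⟩
  · rw [Matrix.det_diagonal, hu]
    simp only
    rw [Finset.prod_mul_distrib, Finset.prod_const, Finset.card_univ, Fintype.card_fin,
      hlam, inv_mul_cancel₀ hptne]
  · have hright : Matrix.diagonal u * Matrix.diagonal (fun i => (u i)⁻¹) = 1 := by
      have huu : (fun i => u i * (u i)⁻¹) = fun _ : Fin n => (1 : k) :=
        funext fun i => mul_inv_cancel₀ (hune i)
      rw [Matrix.diagonal_mul_diagonal, huu, Matrix.diagonal_one]
    rw [Matrix.inv_eq_right_inv hright]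
    ext i j
    rw [Matrix.mul_diagonal, Matrix.diagonal_mul]
    by_cases hij : i = σ j
    · subst hij
      have huσ : u (σ j) = lam * (c j * t j) := by rw [hu]; simp only; rw [hkey j]
      rw [huσ, hu]
      simp only [hc]
      have h1 := hgne j
      have h2 := htne j
      field_simp
    · have hg0 : g i j = 0 := by
        by_contra hne; exact hij ((hg i j).mp hne)
      have hh0 : h i j = 0 := by
        by_contra hne; exact hij ((hh i j).mp hne)
      rw [hg0, hh0, mul_zero, zero_mul]
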